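/- Let η₁ > 2 be a real number, set Δ = √(η₁² − 4), ω₁ = √((η₁ − Δ)/2), ω₂ = √((η₁ + Δ)/2), and let h ≥ 0. Then ∫₀^∞ cos(hx)/(x⁴ + η₁x² + 1) dx = (π/Δ) [e^{−hω₁}/(2ω₁) − e^{−hω₂}/(2ω₂)]. (This is the infinite-band one-dimensional FGC-SSRF covariance for η₁ > 2: G_x(r) = (η₀/Δ)[e^{−hω₁}/(2ω₁) − e^{−hω₂}/(2ω₂)] with h = |r|/ξ.) -/

import Mathlib

open MeasureTheory Real

open Set Filter Complex

open scoped Topology FourierTransform RealInnerProductSpace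

lemma aux_integrableOn_cexp {c : ℂ} (hc : 0 < c.re) :
    IntegrableOn (fun x : ℝ => Complex.exp (-(c * x))) (Ioi (0:ℝ)) := by
  refine Integrable.mono' (exp_neg_integrableOn_Ioi 0 hc) ?_ ?_
  · exact (Complex.continuous_exp.comp (by continuity)).aestronglyMeasurable
  · filter_upwards with x
    rw [Complex.norm_exp]
    simp

lemma aux_integral_cexp {c : ℂ} (hc : 0 < c.re) :
    ∫ x : ℝ in Ioi (0:ℝ), Complex.exp (-(c * x)) = 1 / c := by
  have hc0 : c ≠ 0 := fun h => by simp [h] at hc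
  have hderiv : ∀ x : ℝ, x ∈ Ici (0:ℝ) →
      HasDerivAt (fun x : ℝ => -c⁻¹ * Complex.exp (-(c * x)))
        (Complex.exp (-(c * x))) x := by
    intro x _
    have A : HasDerivAt (fun y : ℂ => Complex.exp (-(c * y)))
        (-c * Complex.exp (-(c * x))) (x : ℂ) := by
      simpa [mul_comm] using (((hasDerivAt_id (x:ℂ)).const_mul c).neg).cexp
    have := (A.comp_ofReal).const_mul (-c⁻¹)
    convert this using 1
    · rfl
    · field_simp
  have htend : Tendsto (fun x : ℝ => -c⁻¹ * Complex.exp (-(c * x))) atTop (𝓝 0) := by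
    rw [show (0:ℂ) = -c⁻¹ * 0 by ring]
    refine Tendsto.const_mul _ (tendsto_zero_iff_norm_tendsto_zero.mpr ?_)
    simp_rw [Complex.norm_exp]
    simp only [Complex.neg_re, Complex.mul_re, Complex.ofReal_re, Complex.ofReal_im, mul_zero,
      sub_zero]
    have : Tendsto (fun x : ℝ => c.re * x) atTop atTop :=
      Tendsto.const_mul_atTop hc tendsto_id
    exact Real.tendsto_exp_atBot.comp (tendsto_neg_atBot_iff.mpr this)
  have := integral_Ioi_of_hasDerivAt_of_tendsto' hderiv (aux_integrableOn_cexp hc) htend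
  rw [this]
  simp [one_div]

lemma aux_integrableOn_comp_neg_Iic {E : Type*} [NormedAddCommGroup E] (f : ℝ → E)
    (hf : IntegrableOn (fun x => f (-x)) (Ioi (0:ℝ))) : IntegrableOn f (Iic (0:ℝ)) := by
  have A : MeasurableEmbedding fun x : ℝ => -x :=
    (Homeomorph.neg ℝ).measurableEmbedding
  rw [IntegrableOn, ← Measure.map_neg_eq_self (volume : Measure ℝ),
    MeasurableEmbedding.restrict_map A, A.integrable_map_iff]
  have : (fun x : ℝ => -x) ⁻¹' (Iic 0) = Ici 0 := by
    ext x; simp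
  rw [this]
  rw [show (f ∘ fun x : ℝ => -x) = fun x => f (-x) from rfl]
  exact Iff.mpr integrableOn_Ici_iff_integrableOn_Ioi hf

lemma aux_fourier_exp_abs {a : ℝ} (ha : 0 < a) (t : ℝ) :
    (𝓕 (fun x : ℝ => (Real.exp (-(a * |x|)) : ℂ))) t
      = ((2*a/(a^2 + (2*π*t)^2) : ℝ) : ℂ) := by
  have hre1 : (0:ℝ) < ((a : ℂ) + (2*π*t) * Complex.I).re := by simp [ha]
  have hre2 : (0:ℝ) < ((a : ℂ) - (2*π*t) * Complex.I).re := by simp [ha]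
  rw [Real.fourier_eq']
  have key : ∀ v : ℝ,
      Complex.exp (((-2 * π * ⟪v, t⟫) : ℝ) * Complex.I) • (Real.exp (-(a * |v|)) : ℂ)
        = Complex.exp (-(a * |v| : ℝ) + ((-2 * π * (v * t)) : ℝ) * Complex.I) := by
    intro v
    rw [RCLike.inner_apply, conj_trivial]
    rw [smul_eq_mul, Complex.ofReal_exp, ← Complex.exp_add]
    congr 1
    push_cast
    ring
  simp_rw [key]
  have hIoi : ∫ v in Ioi (0:ℝ),
      Complex.exp (-(a * |v| : ℝ) + ((-2 * π * (v * t)) : ℝ) * Complex.I)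
        = 1 / ((a : ℂ) + (2*π*t) * Complex.I) := by
    rw [← aux_integral_cexp hre1]
    refine setIntegral_congr_fun measurableSet_Ioi (fun v hv => ?_)
    rw [abs_of_pos hv]
    congr 1
    push_cast
    ring
  have hIic : ∫ v in Iic (0:ℝ),
      Complex.exp (-(a * |v| : ℝ) + ((-2 * π * (v * t)) : ℝ) * Complex.I)
        = 1 / ((a : ℂ) - (2*π*t) * Complex.I) := by
    rw [← neg_zero (G := ℝ), ← integral_comp_neg_Ioi]
    rw [← aux_integral_cexp hre2]
    refine setIntegral_congr_fun measurableSet_Ioi (fun v hv => ?_)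
    rw [abs_neg, abs_of_pos hv]
    congr 1
    push_cast
    ring
  have i1 : IntegrableOn
      (fun v : ℝ => Complex.exp (-(a * |v| : ℝ) + ((-2 * π * (v * t)) : ℝ) * Complex.I))
      (Ioi (0:ℝ)) := by
    refine (aux_integrableOn_cexp hre1).congr_fun (fun v hv => ?_) measurableSet_Ioi
    rw [abs_of_pos hv]; congr 1; push_cast; ring
  have i2 : IntegrableOn
      (fun v : ℝ => Complex.exp (-(a * |v| : ℝ) + ((-2 * π * (v * t)) : ℝ) * Complex.I))
      (Iic (0:ℝ)) := by
    refine aux_integrableOn_comp_neg_Iic _ ?_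
    refine (aux_integrableOn_cexp hre2).congr_fun (fun v hv => ?_) measurableSet_Ioi
    rw [abs_neg, abs_of_pos hv]; congr 1; push_cast; ring
  rw [← intervalIntegral.integral_Iic_add_Ioi i2 i1, hIic, hIoi]
  have h1 : ((a : ℂ) + (2*π*t) * Complex.I) ≠ 0 := by
    intro h; have := congrArg Complex.re h; simp [ha.ne'] at this
  have h2 : ((a : ℂ) - (2*π*t) * Complex.I) ≠ 0 := by
    intro h; have := congrArg Complex.re h; simp [ha.ne'] at this
  have hprod : ((a:ℂ) - 2*π*t * Complex.I) * ((a:ℂ) + 2*π*t * Complex.I)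
      = (a:ℂ)^2 + (2*(π:ℂ)*t)^2 := by
    ring_nf
    rw [Complex.I_sq]
    ring
  have hd : ((a:ℂ)^2 + (2*(π:ℂ)*t)^2) ≠ 0 := by
    rw [← hprod]; exact mul_ne_zero h2 h1
  rw [div_add_div _ _ h2 h1, hprod, one_mul, mul_one,
    show ((a:ℂ) + 2*π*t*Complex.I) + ((a:ℂ) - 2*π*t*Complex.I) = 2*a by ring]
  push_cast
  ring_nf

lemma aux_integrable_inv_sq_add {a : ℝ} (ha : 0 < a) :
    Integrable fun x : ℝ => (x^2 + a^2)⁻¹ := by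
  have h1 : Integrable fun x : ℝ => ((a⁻¹ * x)^2 + 1)⁻¹ := by
    have := integrable_inv_one_add_sq.comp_mul_left' (R := a⁻¹) (by positivity)
    simpa [add_comm] using this
  have h2 := h1.const_mul ((a^2)⁻¹)
  refine h2.congr (Eventually.of_forall fun x => ?_)
  field_simp
lemma aux_integrable_exp_abs {a : ℝ} (ha : 0 < a) :
    Integrable fun x : ℝ => Real.exp (-(a * |x|)) := by
  rw [← integrableOn_univ, ← Iic_union_Ioi (a := (0:ℝ))]
  refine IntegrableOn.union ?_ ?_
  · refine aux_integrableOn_comp_neg_Iic _ ?_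
    refine (exp_neg_integrableOn_Ioi 0 ha).congr_fun (fun x hx => ?_) measurableSet_Ioi
    rw [abs_neg, abs_of_pos hx]; simp only [neg_mul]
  · refine (exp_neg_integrableOn_Ioi 0 ha).congr_fun (fun x hx => ?_) measurableSet_Ioi
    rw [abs_of_pos hx]; simp only [neg_mul]

lemma aux_integrable_FT {a : ℝ} (ha : 0 < a) :
    Integrable fun t : ℝ => ((2*a/(a^2 + (2*π*t)^2) : ℝ)) := by
  have h1 : Integrable fun t : ℝ => (((2*π) * t)^2 + a^2)⁻¹ :=
    (aux_integrable_inv_sq_add ha).comp_mul_left' (by positivity)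
  have h2 := h1.const_mul (2*a)
  refine h2.congr (Eventually.of_forall fun t => ?_)
  rw [eq_div_iff (by positivity)]
  field_simp
  ring

lemma aux_cos_lorentzian {a : ℝ} (ha : 0 < a) {h : ℝ} (hh : 0 ≤ h) :
    ∫ x in Ioi (0:ℝ), Real.cos (h*x) / (x^2 + a^2) = π/(2*a) * Real.exp (-(h*a)) := by
  set f : ℝ → ℂ := fun x => (Real.exp (-(a * |x|)) : ℂ) with hf_def
  have hcont : Continuous f :=
    Complex.continuous_ofReal.comp (Real.continuous_exp.comp (by continuity))
  have hf_int : Integrable f := (aux_integrable_exp_abs ha).ofReal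
  have hF : 𝓕 f = fun t : ℝ => ((2*a/(a^2 + (2*π*t)^2) : ℝ) : ℂ) :=
    funext fun t => aux_fourier_exp_abs ha t
  have hF_int : Integrable (𝓕 f) := by
    rw [hF]; exact (aux_integrable_FT ha).ofReal
  have hinv := hf_int.fourierInv_fourier_eq hF_int (hcont.continuousAt (x := h))
  rw [Real.fourierInv_eq', hF] at hinv
  have hfh : f h = ((Real.exp (-(a*h)) : ℝ) : ℂ) := by
    simp only [hf_def, _root_.abs_of_nonneg hh]
  have hcR : Continuous fun t : ℝ => (2*a/(a^2 + (2*π*t)^2) : ℝ) :=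
    continuous_const.div (by continuity) (fun t => by positivity)
  have hinv' : ∫ t : ℝ, Complex.exp (((2*π*(t*h) : ℝ) : ℂ) * Complex.I)
      * ((2*a/(a^2 + (2*π*t)^2) : ℝ) : ℂ) = ((Real.exp (-(a*h)) : ℝ) : ℂ) := by
    rw [← hfh, ← hinv]
    refine integral_congr_ae (Eventually.of_forall fun t => ?_)
    simp only [RCLike.inner_apply, conj_trivial, smul_eq_mul]
    rw [mul_comm t h]
  have hint : Integrable fun t : ℝ =>
      Complex.exp (((2*π*(t*h) : ℝ) : ℂ) * Complex.I)
        * ((2*a/(a^2 + (2*π*t)^2) : ℝ) : ℂ) := by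
    refine Integrable.mono' (aux_integrable_FT ha) ?_ ?_
    · exact ((Complex.continuous_exp.comp (by continuity)).mul
        (Complex.continuous_ofReal.comp hcR)).aestronglyMeasurable
    · filter_upwards with t
      rw [norm_mul, show ‖Complex.exp (((2*π*(t*h) : ℝ) : ℂ) * Complex.I)‖ = 1 from by
        rw [Complex.norm_exp]; simp, one_mul, Complex.norm_real,
        Real.norm_eq_abs]
      exact le_of_eq (_root_.abs_of_nonneg (by positivity))
  have hre' : ∫ t : ℝ, Real.cos (2*π*(t*h)) * (2*a/(a^2 + (2*π*t)^2))
      = Real.exp (-(a*h)) := by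
    have h1 := integral_re hint
    rw [hinv'] at h1
    refine Eq.trans (integral_congr_ae (Eventually.of_forall fun t => ?_))
      (h1.trans (RCLike.ofReal_re _))
    rw [RCLike.re_to_complex, Complex.mul_re, Complex.exp_ofReal_mul_I_re,
      Complex.ofReal_re, Complex.ofReal_im, mul_zero, sub_zero]
  set G : ℝ → ℝ := fun u => Real.cos (u*h) * (2*a/(a^2+u^2)) with hG_def
  have h2 : ∫ t : ℝ, G ((2*π) * t) = Real.exp (-(a*h)) := by
    rw [← hre']
    refine integral_congr_ae (Eventually.of_forall fun t => ?_)
    simp only [hG_def]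
    rw [mul_assoc]
  have h3 : ∫ u : ℝ, G u = 2*π * Real.exp (-(a*h)) := by
    have h5 := MeasureTheory.Measure.integral_comp_mul_left G (2*π)
    rw [h2, smul_eq_mul, abs_of_pos (by positivity : (0:ℝ) < (2*π)⁻¹)] at h5
    have h2π : (0:ℝ) < 2*π := by positivity
    field_simp at h5
    linarith [h5]
  have h4 : ∫ x in Ioi (0:ℝ), G x = π * Real.exp (-(a*h)) := by
    have habs : ∫ x : ℝ, G |x| = 2 * ∫ x in Ioi (0:ℝ), G x := integral_comp_abs
    have heq : ∫ x : ℝ, G |x| = ∫ x : ℝ, G x := by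
      refine integral_congr_ae (Eventually.of_forall fun x => ?_)
      simp only [hG_def]
      rw [show |x| * h = |x * h| by rw [abs_mul, _root_.abs_of_nonneg hh],
        Real.cos_abs, _root_.sq_abs]
    rw [heq, h3] at habs
    linarith [habs]
  rw [show (fun x : ℝ => Real.cos (h*x) / (x^2 + a^2))
      = fun x : ℝ => (2*a)⁻¹ * G x from funext fun x => by
    simp only [hG_def]
    rw [mul_comm x h]
    field_simp
    ring]
  rw [integral_const_mul, h4]
  field_simp

lemma aux_integrableOn_cos {a : ℝ} (ha : 0 < a) (h : ℝ) :
    IntegrableOn (fun x : ℝ => Real.cos (h*x) / (x^2 + a^2)) (Ioi (0:ℝ)) := by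
  refine Integrable.mono' (aux_integrable_inv_sq_add ha).integrableOn ?_ ?_
  · exact ((Real.continuous_cos.comp (continuous_const.mul continuous_id)).div
      (by continuity) (fun x => by positivity)).aestronglyMeasurable
  · filter_upwards with x
    rw [Real.norm_eq_abs, abs_div, _root_.abs_of_pos (by positivity : (0:ℝ) < x^2+a^2),
      div_le_iff₀ (by positivity)]
    calc |Real.cos (h*x)| ≤ 1 := Real.abs_cos_le_one _
    _ ≤ (x^2+a^2)⁻¹ * (x^2+a^2) := by rw [inv_mul_cancel₀ (by positivity)]

/-- Infinite-band 1D FGC-SSRF covariance for η₁ > 2: with Δ = √(η₁²−4),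
ω₁ = √((η₁−Δ)/2), ω₂ = √((η₁+Δ)/2) and h ≥ 0,
∫₀^∞ cos(hx)/(x⁴ + η₁x² + 1) dx = (π/Δ)[e^{−hω₁}/(2ω₁) − e^{−hω₂}/(2ω₂)]. -/
theorem fgc_ssrf_covariance_one_dim_eta_gt_two
    (η₁ : ℝ) (hη : 2 < η₁)
    (Δ ω₁ ω₂ : ℝ) (hΔ : Δ = Real.sqrt (η₁ ^ 2 - 4))
    (hω₁ : ω₁ = Real.sqrt ((η₁ - Δ) / 2)) (hω₂ : ω₂ = Real.sqrt ((η₁ + Δ) / 2))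
    (h : ℝ) (hh : 0 ≤ h) :
    ∫ x in Set.Ioi (0 : ℝ), Real.cos (h * x) / (x ^ 4 + η₁ * x ^ 2 + 1) =
      (π / Δ) * (Real.exp (-h * ω₁) / (2 * ω₁) - Real.exp (-h * ω₂) / (2 * ω₂)) := by
  have hη0 : (0:ℝ) < η₁ := by linarith
  have h4 : (0:ℝ) < η₁^2 - 4 := by nlinarith
  have hΔpos : 0 < Δ := hΔ ▸ Real.sqrt_pos.mpr h4
  have hΔsq : Δ^2 = η₁^2 - 4 := by rw [hΔ, Real.sq_sqrt h4.le]
  have hΔlt : Δ < η₁ := by nlinarith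
  have hω₁pos : 0 < ω₁ := hω₁ ▸ Real.sqrt_pos.mpr (by linarith)
  have hω₂pos : 0 < ω₂ := hω₂ ▸ Real.sqrt_pos.mpr (by linarith)
  have hω₁sq : ω₁^2 = (η₁ - Δ)/2 := by rw [hω₁, Real.sq_sqrt (by linarith)]
  have hω₂sq : ω₂^2 = (η₁ + Δ)/2 := by rw [hω₂, Real.sq_sqrt (by linarith)]
  have hsum : ω₁^2 + ω₂^2 = η₁ := by rw [hω₁sq, hω₂sq]; ring
  have hprod : ω₁^2 * ω₂^2 = 1 := by rw [hω₁sq, hω₂sq]; nlinarith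
  have hdiff : ω₂^2 - ω₁^2 = Δ := by rw [hω₁sq, hω₂sq]; ring
  have key : ∀ x : ℝ, Real.cos (h*x) / (x^4 + η₁*x^2 + 1)
      = Δ⁻¹ * (Real.cos (h*x) / (x^2 + ω₁^2) - Real.cos (h*x) / (x^2 + ω₂^2)) := by
    intro x
    have hA : (0:ℝ) < x^2 + ω₁^2 := by positivity
    have hB : (0:ℝ) < x^2 + ω₂^2 := by positivity
    have hP : x^4 + η₁*x^2 + 1 = (x^2 + ω₁^2) * (x^2 + ω₂^2) := by
      linear_combination (-x^2) * hsum - hprod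
    rw [hP, div_sub_div _ _ hA.ne' hB.ne',
      show Real.cos (h*x) * (x^2+ω₂^2) - (x^2+ω₁^2) * Real.cos (h*x)
        = Δ * Real.cos (h*x) from by linear_combination Real.cos (h*x) * hdiff]
    field_simp
  rw [setIntegral_congr_fun measurableSet_Ioi (fun x _ => key x), integral_const_mul,
    integral_sub (aux_integrableOn_cos hω₁pos h) (aux_integrableOn_cos hω₂pos h),
    aux_cos_lorentzian hω₁pos hh, aux_cos_lorentzian hω₂pos hh]
  rw [show -h*ω₁ = -(h*ω₁) by ring, show -h*ω₂ = -(h*ω₂) by ring]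
  field_simp
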